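/- There is a constant c > 0 such that the following holds for every field K, every n ∈ ℕ, every a ∈ (0, 1/2), every 2^n × 2^n matrix T over K with rows and columns indexed by {0,1}^n, and every 2^n × 2^n matrix M over K of rank r: there exists a 2^n × 2^n matrix M' over K of rank at most r + 4n·2^{n − c·a²·n} such that M'(x,y) = T(x,y) for all x,y ∈ {0,1}^n satisfying at least one of the following: |x| ∉ [(1/2 − a)n, (1/2 + a)n], or |y| ∉ [(1/2 − a)n, (1/2 + a)n], or M(x,y) = T(x,y). -/

import Mathlib

open scoped Classical
open Finset

noncomputable section

def ip {n : ℕ} (x y : Fin n → Bool) : ℕ :=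
  (Finset.univ.filter (fun i => x i ∧ y i)).card

def wt {n : ℕ} (x : Fin n → Bool) : ℕ :=
  (Finset.univ.filter (fun i => x i)).card

def Had (K : Type) [Field K] (n : ℕ) : Matrix (Fin n → Bool) (Fin n → Bool) K :=
  Matrix.of fun x y => (-1 : K) ^ ip x y

def diffCount {n : ℕ} {K : Type} [Field K]
    (A B : Matrix (Fin n → Bool) (Fin n → Bool) K) : ℕ :=
  Nat.card {p : (Fin n → Bool) × (Fin n → Bool) // A p.1 p.2 ≠ B p.1 p.2}

def ProbRankLE {n : ℕ} {K : Type} [Field K]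
    (A : Matrix (Fin n → Bool) (Fin n → Bool) K) (ε r : ℝ) : Prop :=
  ∃ (s : Finset (Matrix (Fin n → Bool) (Fin n → Bool) K))
    (w : Matrix (Fin n → Bool) (Fin n → Bool) K → ℝ),
    (∀ M ∈ s, 0 ≤ w M) ∧ (∑ M ∈ s, w M) = 1 ∧
    (∀ M ∈ s, ((M.rank : ℝ)) ≤ r) ∧
    ∀ x y : Fin n → Bool, 1 - ε ≤ ∑ M ∈ s, (if M x y = A x y then w M else 0)

lemma log_one_sub_le {u : ℝ} (hu0 : 0 ≤ u) (hu : u ≤ 1/2) :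
    Real.log (1 - u) ≤ -u - u^2/8 := by
  have h1 : (0:ℝ) < 1 - u := by linarith
  have ha : (1 - u/2) ≤ Real.exp (-(u/2)) := by
    have := Real.add_one_le_exp (-(u/2)); linarith
  have hb : (1 - u^2/8) ≤ Real.exp (-(u^2/8)) := by
    have := Real.add_one_le_exp (-(u^2/8)); linarith
  have ha0 : (0:ℝ) ≤ 1 - u/2 := by linarith
  have hb0 : (0:ℝ) ≤ 1 - u^2/8 := by nlinarith
  have h2 : 1 - u ≤ Real.exp (-u - u^2/8) := by
    have hc : Real.exp (-u - u^2/8)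
        = Real.exp (-(u/2)) * Real.exp (-(u/2)) * Real.exp (-(u^2/8)) := by
      rw [← Real.exp_add, ← Real.exp_add]; ring_nf
    have e1 : (1 - u/2) * (1 - u/2) ≤ Real.exp (-(u/2)) * Real.exp (-(u/2)) :=
      mul_le_mul ha ha ha0 (Real.exp_nonneg _)
    have e2 : (1 - u/2) * (1 - u/2) * (1 - u^2/8)
        ≤ Real.exp (-(u/2)) * Real.exp (-(u/2)) * Real.exp (-(u^2/8)) :=
      mul_le_mul e1 hb hb0 (by positivity)
    have e3 : 1 - u ≤ (1 - u/2) * (1 - u/2) * (1 - u^2/8) := by nlinarith [sq_nonneg u, mul_nonneg (mul_nonneg hu0 hu0) hu0, sq_nonneg (u*u)]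
    linarith [hc ▸ e2]
  calc Real.log (1 - u) ≤ Real.log (Real.exp (-u - u^2/8)) := Real.log_le_log h1 h2
  _ = -u - u^2/8 := Real.log_exp _

lemma neg_le_log_one_sub {a : ℝ} (h0 : 0 ≤ a) (h : a ≤ 1/2) :
    -a - 2*a^2 ≤ Real.log (1 - a) := by
  have h1 : (0:ℝ) < 1 - a := by linarith
  have hp : (0:ℝ) < 1 + (a + 2*a^2) := by nlinarith
  have hexp := Real.add_one_le_exp (a + 2*a^2)
  have h2 : Real.exp (-a - 2*a^2) ≤ 1 - a := by
    have heq : Real.exp (-a - 2*a^2) = (Real.exp (a + 2*a^2))⁻¹ := by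
      rw [← Real.exp_neg]; ring_nf
    have h3 : (Real.exp (a + 2*a^2))⁻¹ ≤ (1 + (a + 2*a^2))⁻¹ := by
      apply inv_anti₀ hp; linarith
    have h5 : 1 ≤ (1 - a) * (1 + (a + 2*a^2)) := by nlinarith
    have h4 : (1 + (a + 2*a^2))⁻¹ ≤ 1 - a := by
      calc (1 + (a + 2*a^2))⁻¹ = 1 * (1 + (a + 2*a^2))⁻¹ := (one_mul _).symm
      _ ≤ ((1 - a) * (1 + (a + 2*a^2))) * (1 + (a + 2*a^2))⁻¹ :=
          mul_le_mul_of_nonneg_right h5 (by positivity)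
      _ = 1 - a := by field_simp
    rw [heq]; linarith
  calc -a - 2*a^2 = Real.log (Real.exp (-a - 2*a^2)) := (Real.log_exp _).symm
  _ ≤ Real.log (1 - a) := Real.log_le_log (Real.exp_pos _) h2

lemma core_ineq {a : ℝ} (h0 : 0 < a) (h : a < 1/2) :
    Real.log (2 - a) - (1/2 - a) * Real.log (1 - a) ≤ (1 - a^2/32) * Real.log 2 := by
  have hsplit : Real.log (2 - a) = Real.log 2 + Real.log (1 - a/2) := by
    rw [← Real.log_mul (by norm_num) (by linarith)]
    ring_nf
  have hA := log_one_sub_le (u := a/2) (by linarith) (by linarith)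
  have hB := neg_le_log_one_sub (a := a) h0.le h.le
  have hlog2 : Real.log 2 ≤ 1 := by
    have := Real.log_le_sub_one_of_pos (by norm_num : (0:ℝ) < 2); linarith
  have hBmul : (1/2 - a) * (-a - 2*a^2) ≤ (1/2 - a) * Real.log (1 - a) :=
    mul_le_mul_of_nonneg_left hB (by linarith)
  have hl2 : a^2/32 * Real.log 2 ≤ a^2/32 * 1 :=
    mul_le_mul_of_nonneg_left hlog2 (by positivity)
  nlinarith [sq_nonneg a, pow_pos h0 3]

lemma sum_pow_wt (n : ℕ) (t : ℝ) : ∑ x : Fin n → Bool, t ^ wt x = (1 + t)^n := by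
  induction n with
  | zero =>
      have : ∀ x : Fin 0 → Bool, wt x = 0 := fun x => by simp [wt]
      simp [this]
  | succ n ih =>
      have hwt : ∀ (b : Bool) (x : Fin n → Bool),
          wt (Fin.cons b x) = (if b then 1 else 0) + wt x := by
        intro b x
        simp only [wt, Finset.card_filter]
        rw [Fin.sum_univ_succ]
        simp [Fin.cons_succ, Fin.cons_zero]
      have he := Fintype.sum_equiv (Fin.consEquiv (fun _ : Fin (n+1) => Bool)).symm
        (fun x : Fin (n+1) → Bool => t ^ wt x)
        (fun p : Bool × (Fin n → Bool) => t ^ wt (Fin.cons p.1 p.2)) ?_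
      · rw [he, Fintype.sum_prod_type]
        have : ∀ b : Bool, ∑ x : Fin n → Bool, t ^ wt (Fin.cons b x)
            = t ^ (if b then 1 else 0) * (1 + t)^n := by
          intro b
          rw [← ih, Finset.mul_sum]
          exact Finset.sum_congr rfl fun x _ => by rw [hwt, pow_add]
        rw [Fintype.sum_bool, this, this]
        simp [pow_succ]
        ring
      · intro x
        simp [Fin.consEquiv]

lemma count_low (n : ℕ) {a : ℝ} (h0 : 0 < a) (h : a < 1/2) :
    (((Finset.univ.filter fun x : Fin n → Bool => (wt x : ℝ) < (1/2 - a)*n).card : ℝ))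
      ≤ 2 ^ ((n:ℝ) - 1/32 * a^2 * n) := by
  set t : ℝ := 1 - a with ht
  have ht0 : (0:ℝ) < t := by rw [ht]; linarith
  have ht1 : t ≤ 1 := by rw [ht]; linarith
  set S := Finset.univ.filter fun x : Fin n → Bool => (wt x : ℝ) < (1/2 - a)*n with hS
  have key : (S.card : ℝ) * t ^ ((1/2 - a)*(n:ℝ)) ≤ (1 + t)^n := by
    calc (S.card : ℝ) * t ^ ((1/2 - a)*(n:ℝ))
        = ∑ _x ∈ S, t ^ ((1/2 - a)*(n:ℝ)) := by rw [Finset.sum_const, nsmul_eq_mul]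
      _ ≤ ∑ x ∈ S, t ^ wt x := by
          apply Finset.sum_le_sum
          intro x hx
          have hxlt : (wt x : ℝ) < (1/2 - a)*n := by
            simpa [hS] using (Finset.mem_filter.1 hx).2
          have := Real.rpow_le_rpow_of_exponent_ge ht0 ht1 hxlt.le
          rwa [Real.rpow_natCast] at this
      _ ≤ ∑ x : Fin n → Bool, t ^ wt x :=
          Finset.sum_le_sum_of_subset_of_nonneg (Finset.subset_univ _)
            (fun x _ _ => by positivity)
      _ = (1 + t)^n := sum_pow_wt n t
  have hpow : (0:ℝ) < t ^ ((1/2 - a)*(n:ℝ)) := Real.rpow_pos_of_pos ht0 _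
  have hcard : (S.card : ℝ) ≤ (1 + t)^n / t ^ ((1/2 - a)*(n:ℝ)) :=
    (le_div_iff₀ hpow).2 key
  refine hcard.trans ?_
  have hlhs : (0:ℝ) < (1 + t)^n / t ^ ((1/2 - a)*(n:ℝ)) := by positivity
  have hrhs : (0:ℝ) < (2:ℝ) ^ ((n:ℝ) - 1/32 * a^2 * n) := by positivity
  rw [← Real.log_le_log_iff hlhs hrhs]
  rw [Real.log_div (by positivity) (by positivity), Real.log_pow,
    Real.log_rpow ht0, Real.log_rpow (by norm_num : (0:ℝ) < 2)]
  have h1t : (1:ℝ) + t = 2 - a := by rw [ht]; ring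
  rw [h1t, ht]
  have hcore := core_ineq h0 h
  have := mul_le_mul_of_nonneg_left hcore (Nat.cast_nonneg (α := ℝ) n)
  nlinarith [this]

variable {K : Type} [Field K]

lemma matrix_rank_add_le {m : Type} [Fintype m] (A B : Matrix m m K) :
    (A + B).rank ≤ A.rank + B.rank := by
  classical
  have h : LinearMap.range (A + B).mulVecLin ≤
      LinearMap.range A.mulVecLin ⊔ LinearMap.range B.mulVecLin := by
    rw [Matrix.mulVecLin_add]
    rintro v ⟨w, rfl⟩
    exact Submodule.add_mem_sup ⟨w, rfl⟩ ⟨w, rfl⟩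
  calc (A + B).rank
      ≤ Module.finrank K ↥(LinearMap.range A.mulVecLin ⊔ LinearMap.range B.mulVecLin) :=
        Submodule.finrank_mono h
    _ ≤ A.rank + B.rank := Submodule.finrank_add_le_finrank_add_finrank _ _

lemma rank_le_card_support_rows {m : Type} [Fintype m] [DecidableEq m]
    (A : Matrix m m K) (S : Finset m) (h : ∀ x ∉ S, ∀ y, A x y = 0) :
    A.rank ≤ S.card := by
  classical
  set E : Matrix m {x // x ∈ S} K := Matrix.of fun x s => if x = (s : m) then 1 else 0 with hE
  set B : Matrix {x // x ∈ S} m K := A.submatrix Subtype.val id with hB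
  have hEB : E * B = A := by
    ext x y
    simp only [Matrix.mul_apply, hE, hB, Matrix.of_apply, Matrix.submatrix_apply, id]
    have step : ∀ s : {x // x ∈ S}, (if x = (s : m) then (1:K) else 0) * A s y
        = if (s : m) = x then A x y else 0 := by
      intro s
      by_cases hx : x = (s : m)
      · simp [hx]
      · rw [if_neg hx, zero_mul, if_neg (fun hh => hx hh.symm)]
    rw [Finset.sum_congr rfl fun s _ => step s]
    rw [Finset.sum_coe_sort S (fun s => if s = x then A x y else 0), Finset.sum_ite_eq']
    by_cases hxS : x ∈ S
    · simp [hxS]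
    · simp [hxS, h x hxS y]
  calc A.rank = (E * B).rank := by rw [hEB]
    _ ≤ B.rank := Matrix.rank_mul_le_right _ _
    _ ≤ Fintype.card {x // x ∈ S} := Matrix.rank_le_card_height _
    _ = S.card := Fintype.card_coe S

lemma rank_le_card_support_cols {m : Type} [Fintype m] [DecidableEq m]
    (A : Matrix m m K) (S : Finset m) (h : ∀ y ∉ S, ∀ x, A x y = 0) :
    A.rank ≤ S.card := by
  rw [← Matrix.rank_transpose]
  exact rank_le_card_support_rows A.transpose S
    (fun y hy x => by rw [Matrix.transpose_apply]; exact h y hy x)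


/-- Corollary correct-WH: correcting unbalanced rows/columns of an approximating matrix. -/
theorem correct_unbalanced_rows_cols :
    ∃ c : ℝ, 0 < c ∧
      ∀ (K : Type) [Field K], ∀ n : ℕ, ∀ a : ℝ, 0 < a → a < 1 / 2 →
        ∀ T M : Matrix (Fin n → Bool) (Fin n → Bool) K,
          ∃ M' : Matrix (Fin n → Bool) (Fin n → Bool) K,
            (M'.rank : ℝ) ≤ (M.rank : ℝ) + 4 * n * 2 ^ ((n : ℝ) - c * a ^ 2 * n) ∧
            ∀ x y : Fin n → Bool,
              (¬ ((1 / 2 - a) * n ≤ (wt x : ℝ) ∧ (wt x : ℝ) ≤ (1 / 2 + a) * n) ∨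
               ¬ ((1 / 2 - a) * n ≤ (wt y : ℝ) ∧ (wt y : ℝ) ≤ (1 / 2 + a) * n) ∨
               M x y = T x y) →
              M' x y = T x y := by
  refine ⟨1/32, by norm_num, ?_⟩
  intro K _ n a ha0 ha2 T M
  classical
  set good : (Fin n → Bool) → Prop :=
    fun x => ((1 / 2 - a) * n ≤ (wt x : ℝ) ∧ (wt x : ℝ) ≤ (1 / 2 + a) * n) with hgood
  set Bad : Finset (Fin n → Bool) := Finset.univ.filter fun x => ¬ good x with hBad
  set D1 : Matrix (Fin n → Bool) (Fin n → Bool) K :=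
    Matrix.of fun x y => if good x then 0 else T x y - M x y with hD1
  set D2 : Matrix (Fin n → Bool) (Fin n → Bool) K :=
    Matrix.of fun x y => if good x ∧ ¬ good y then T x y - M x y else 0 with hD2
  refine ⟨M + D1 + D2, ?_, ?_⟩
  · -- rank bound
    have hr1 : D1.rank ≤ Bad.card := by
      apply rank_le_card_support_rows D1 Bad
      intro x hx y
      have hgx : good x := by
        by_contra hgx
        exact hx (by simp [hBad, hgx])
      simp only [hD1, Matrix.of_apply]
      rw [if_pos hgx]
    have hr2 : D2.rank ≤ Bad.card := by
      apply rank_le_card_support_cols D2 Bad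
      intro y hy x
      have hgy : good y := by
        by_contra hgy
        exact hy (by simp [hBad, hgy])
      simp only [hD2, Matrix.of_apply]
      rw [if_neg (fun h : good x ∧ ¬ good y => h.2 hgy)]
    have hrank : (M + D1 + D2).rank ≤ M.rank + Bad.card + Bad.card := by
      calc (M + D1 + D2).rank ≤ (M + D1).rank + D2.rank := matrix_rank_add_le _ _
        _ ≤ M.rank + D1.rank + D2.rank := Nat.add_le_add_right (matrix_rank_add_le _ _) _
        _ ≤ M.rank + Bad.card + Bad.card := by omega
    -- counting
    set L : Finset (Fin n → Bool) :=
      Finset.univ.filter fun x : Fin n → Bool => (wt x : ℝ) < (1/2 - a)*n with hL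
    set H : Finset (Fin n → Bool) :=
      Finset.univ.filter fun x : Fin n → Bool => (1/2 + a)*(n:ℝ) < wt x with hH
    have hsub : Bad ⊆ L ∪ H := by
      intro x hx
      have hx' : ¬ good x := (Finset.mem_filter.1 hx).2
      have hx'' : ¬((1 / 2 - a) * (n:ℝ) ≤ (wt x : ℝ) ∧ (wt x : ℝ) ≤ (1 / 2 + a) * n) := hx'
      simp only [hL, hH, Finset.mem_union, Finset.mem_filter, Finset.mem_univ, true_and]
      rcases not_and_or.1 hx'' with h | h
      · exact Or.inl (lt_of_not_ge h)
      · exact Or.inr (lt_of_not_ge h)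
    have hwtc : ∀ x : Fin n → Bool, wt (fun i => !(x i)) + wt x = n := by
      intro x
      have he : (Finset.univ.filter fun i => (!(x i)) = true)
          = Finset.univ.filter fun i => ¬ (x i = true) := by
        apply Finset.filter_congr
        intro i _
        simp
      rw [wt, wt, he, add_comm, Finset.card_filter_add_card_filter_not,
        Finset.card_univ, Fintype.card_fin]
    have hHL : H.card ≤ L.card := by
      apply Finset.card_le_card_of_injOn (fun x => fun i => !(x i))
      · intro x hx
        have hx' : (1/2 + a)*(n:ℝ) < wt x := by
          simpa [hH] using (Finset.mem_filter.1 hx).2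
        have hc := hwtc x
        have hc' : (wt (fun i => !(x i)) : ℝ) + (wt x : ℝ) = n := by exact_mod_cast hc
        simp only [hL, Finset.mem_coe, Finset.mem_filter, Finset.mem_univ, true_and]
        linarith
      · intro x _ y _ hxy
        funext i
        have := congrFun hxy i
        simpa using this
    have hcount : (Bad.card : ℝ) ≤ 2 * L.card := by
      have h1 : Bad.card ≤ L.card + H.card :=
        le_trans (Finset.card_le_card hsub) (Finset.card_union_le _ _)
      have : Bad.card ≤ 2 * L.card := by omega
      exact_mod_cast this
    have hLbound : (L.card : ℝ) ≤ (n:ℝ) * 2 ^ ((n:ℝ) - 1/32 * a^2 * n) := by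
      rcases Nat.eq_zero_or_pos n with h0 | h0
      · have hLe : L = ∅ := by
          apply Finset.eq_empty_of_forall_notMem
          intro x hx
          have hx' : (wt x : ℝ) < (1/2 - a)*(n:ℝ) := by
            simpa [hL] using (Finset.mem_filter.1 hx).2
          have hn0 : ((n:ℕ):ℝ) = 0 := by simp [h0]
          rw [hn0] at hx'
          have : (0:ℝ) ≤ (wt x : ℝ) := Nat.cast_nonneg _
          nlinarith
        have hn0 : ((n:ℕ):ℝ) = 0 := by simp [h0]
        rw [hLe, hn0]
        simp
      · have h1 : (1:ℝ) ≤ (n:ℝ) := by exact_mod_cast h0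
        calc (L.card : ℝ) ≤ 2 ^ ((n:ℝ) - 1/32 * a^2 * n) := count_low n ha0 ha2
          _ = 1 * 2 ^ ((n:ℝ) - 1/32 * a^2 * n) := (one_mul _).symm
          _ ≤ (n:ℝ) * 2 ^ ((n:ℝ) - 1/32 * a^2 * n) := by
              apply mul_le_mul_of_nonneg_right h1 (by positivity)
    have hcast : ((M + D1 + D2).rank : ℝ) ≤ (M.rank : ℝ) + 2 * (Bad.card : ℝ) := by
      have := hrank
      have h2 : ((M + D1 + D2).rank : ℝ) ≤ (M.rank : ℝ) + (Bad.card : ℝ) + (Bad.card : ℝ) := by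
        exact_mod_cast this
      linarith
    calc ((M + D1 + D2).rank : ℝ) ≤ (M.rank : ℝ) + 2 * (Bad.card : ℝ) := hcast
      _ ≤ (M.rank : ℝ) + 2 * (2 * L.card) := by linarith
      _ ≤ (M.rank : ℝ) + 4 * n * 2 ^ ((n:ℝ) - 1/32 * a^2 * n) := by linarith
  · intro x y hc
    by_cases hx : good x
    · by_cases hy : good y
      · have hMT : M x y = T x y := by
          rcases hc with h | h | h
          · exact absurd hx h
          · exact absurd hy h
          · exact h
        simp [Matrix.add_apply, hD1, hD2, hx, hy, hMT]
      · simp only [Matrix.add_apply, hD1, hD2, Matrix.of_apply, if_pos hx,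
          if_pos (And.intro hx hy)]
        ring
    · simp only [Matrix.add_apply, hD1, hD2, Matrix.of_apply, if_neg hx]
      have : ¬ (good x ∧ ¬ good y) := fun h => hx h.1
      rw [if_neg this]
      ring
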